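/- For T admitting an A-adjoint and α ∈ [0,1], ‖T‖_{A,α}² ≥ α c_A(T)² + (1−α)‖T‖_A². -/

import Mathlib

open scoped ComplexOrder
open ContinuousLinearMap Filter Topology

variable {H : Type*} [NormedAddCommGroup H] [InnerProductSpace ℂ H] [CompleteSpace H]

/-- The A-semi-inner product `⟨x, y⟩_A = ⟨A x, y⟩` (Mathlib convention: conjugate
linear in the first variable). -/
noncomputable def aInner (A : H →L[ℂ] H) (x y : H) : ℂ := inner ℂ (A x) y

/-- The A-seminorm `‖x‖_A = sqrt ⟨x, x⟩_A`. -/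
noncomputable def aNorm (A : H →L[ℂ] H) (x : H) : ℝ := Real.sqrt (aInner A x x).re

/-- `T` is A-bounded. -/
def ABounded (A T : H →L[ℂ] H) : Prop := ∃ c > 0, ∀ x, aNorm A (T x) ≤ c * aNorm A x

/-- The A-operator seminorm. -/
noncomputable def opNormA (A T : H →L[ℂ] H) : ℝ :=
  sSup {r | ∃ x ∈ closure (Set.range A), aNorm A x = 1 ∧ r = aNorm A (T x)}

/-- The A-numerical radius. -/
noncomputable def wA (A T : H →L[ℂ] H) : ℝ :=
  sSup {r | ∃ x, aNorm A x = 1 ∧ r = ‖aInner A (T x) x‖}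

/-- The A-Crawford number. -/
noncomputable def cA (A T : H →L[ℂ] H) : ℝ :=
  sInf {r | ∃ x, aNorm A x = 1 ∧ r = ‖aInner A (T x) x‖}

/-- The `A_α`-seminorm `‖T‖_{A,α}`. -/
noncomputable def alphaNorm (A T : H →L[ℂ] H) (α : ℝ) : ℝ :=
  sSup {r | ∃ x, aNorm A x = 1 ∧
    r = Real.sqrt (α * ‖aInner A (T x) x‖ ^ 2 + (1 - α) * aNorm A (T x) ^ 2)}

/-- `S` is the A-adjoint `T^{♯_A}` of `T`: the solution of `A X = T* A` whose
range lies in the closure of the range of `A`. -/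
def IsAAdjoint (A T S : H →L[ℂ] H) : Prop :=
  A ∘L S = (ContinuousLinearMap.adjoint T) ∘L A ∧ ∀ x, S x ∈ closure (Set.range A)

theorem isSelfAdjoint_inner_left {B : H →L[ℂ] H} (hB : IsSelfAdjoint B) (u y : H) :
    (inner ℂ (B u) y : ℂ) = inner ℂ u (B y) := by
  conv_lhs => rw [← hB.adjoint_eq]
  exact ContinuousLinearMap.adjoint_inner_left B y u

theorem re_inner_self (z : H) : (inner ℂ z z : ℂ).re = ‖z‖ ^ 2 := by
  simpa using inner_self_eq_norm_sq (𝕜 := ℂ) z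

theorem re_le_norm' (z : ℂ) : z.re ≤ ‖z‖ := by
  exact Complex.re_le_norm z

set_option maxHeartbeats 1000000 in
set_option synthInstance.maxHeartbeats 1000000 in
/-- The square root of a positive operator realizes the A-inner product. -/
theorem aInner_eq_sqrt (A : H →L[ℂ] H) (hA : A.IsPositive) (x y : H) :
    aInner A x y = inner ℂ (CFC.sqrt A x) (CFC.sqrt A y) := by
  have hA0 : (0:H →L[ℂ] H) ≤ A := (ContinuousLinearMap.nonneg_iff_isPositive A).mpr hA
  have hB2 : CFC.sqrt A * CFC.sqrt A = A := CFC.sqrt_mul_sqrt_self A hA0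
  have hBsa : IsSelfAdjoint (CFC.sqrt A) := IsSelfAdjoint.of_nonneg (CFC.sqrt_nonneg (a := A))
  have hAx : A x = CFC.sqrt A (CFC.sqrt A x) :=
    (congrArg (fun f : H →L[ℂ] H => f x) hB2).symm
  rw [aInner, hAx]
  exact isSelfAdjoint_inner_left hBsa (CFC.sqrt A x) y

theorem aNorm_eq_sqrt (A : H →L[ℂ] H) (hA : A.IsPositive) (x : H) :
    aNorm A x = ‖CFC.sqrt A x‖ := by
  rw [aNorm, aInner_eq_sqrt A hA]
  rw [re_inner_self, Real.sqrt_sq (norm_nonneg _)]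

theorem aNorm_nonneg (A : H →L[ℂ] H) (x : H) : 0 ≤ aNorm A x := Real.sqrt_nonneg _

/-- Cauchy–Schwarz for the A-semi-inner product. -/
theorem aInner_abs_le (A : H →L[ℂ] H) (hA : A.IsPositive) (x y : H) :
    ‖aInner A x y‖ ≤ aNorm A x * aNorm A y := by
  rw [aInner_eq_sqrt A hA, aNorm_eq_sqrt A hA, aNorm_eq_sqrt A hA]
  exact norm_inner_le_norm _ _

/-- The key boundedness estimate: if `T` admits an A-adjoint then
`‖T x‖_A ^ 2 ≤ ‖S ∘L T‖` on the A-unit sphere. -/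
theorem aNorm_apply_le (A T S : H →L[ℂ] H) (hA : A.IsPositive) (hT : IsAAdjoint A T S)
    (x : H) (hx : aNorm A x = 1) : aNorm A (T x) ^ 2 ≤ ‖S ∘L T‖ := by
  set R : H →L[ℂ] H := S ∘L T with hR
  set B : H →L[ℂ] H := CFC.sqrt A with hBdef
  have hAsa : IsSelfAdjoint A := hA.isSelfAdjoint
  -- pointwise identity A (R u) = T† (A (T u))
  have hAR : ∀ u : H, A (R u) = ContinuousLinearMap.adjoint T (A (T u)) := by
    intro u
    have := congrArg (fun f : H →L[ℂ] H => f (T u)) hT.1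
    simpa [hR] using this
  -- shift across the form
  have hshift1 : ∀ u y : H, (inner ℂ (A (R u)) y : ℂ) = inner ℂ (A u) (R y) := by
    intro u y
    rw [hAR u, ContinuousLinearMap.adjoint_inner_left]
    rw [isSelfAdjoint_inner_left hAsa u (R y), hAR y,
      ContinuousLinearMap.adjoint_inner_right]
    exact isSelfAdjoint_inner_left hAsa (T u) (T y)
  have hshiftn : ∀ (n : ℕ) (u y : H), (inner ℂ (A ((R^n) u)) y : ℂ) = inner ℂ (A u) ((R^n) y) := by
    intro n
    induction n with
    | zero => intro u y; simp
    | succ n ih =>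
      intro u y
      have e1 : (R^(n+1)) u = (R^n) (R u) := by
        rw [pow_succ]; rfl
      have e2 : (R^(n+1)) y = R ((R^n) y) := by
        rw [pow_succ']; rfl
      rw [e1, ih (R u) y, hshift1 u ((R^n) y), e2]
  set q : ℕ → ℝ := fun n => (inner ℂ (A ((R^n) x)) x : ℂ).re with hqdef
  have hq2 : ∀ n, q (2*n) = ‖B ((R^n) x)‖^2 := by
    intro n
    have e1 : (R^(2*n)) x = (R^n) ((R^n) x) := by
      rw [two_mul, pow_add]; rfl
    have : q (2*n) = (inner ℂ (A ((R^n) x)) ((R^n) x) : ℂ).re := by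
      simp only [hqdef, e1, hshiftn n ((R^n) x) x]
    rw [this]
    have := aInner_eq_sqrt A hA ((R^n) x) ((R^n) x)
    rw [aInner] at this
    rw [this, ← hBdef]
    exact re_inner_self _
  have hBx : ‖B x‖ = 1 := by rw [hBdef, ← aNorm_eq_sqrt A hA, hx]
  have hCS : ∀ n, q n ≤ Real.sqrt (q (2*n)) := by
    intro n
    have e : (inner ℂ (A ((R^n) x)) x : ℂ) = inner ℂ (B ((R^n) x)) (B x) := by
      have := aInner_eq_sqrt A hA ((R^n) x) x
      rw [aInner] at this
      rw [this]
    have : q n ≤ ‖(inner ℂ (B ((R^n) x)) (B x) : ℂ)‖ := by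
      rw [hqdef]; simp only [e]
      exact re_le_norm' _
    refine this.trans ?_
    have h2 := norm_inner_le_norm (𝕜 := ℂ) (B ((R^n) x)) (B x)
    rw [hBx, mul_one] at h2
    refine h2.trans ?_
    rw [hq2 n, Real.sqrt_sq (norm_nonneg _)]
  have hqle : ∀ n : ℕ, 0 < n → q n ≤ (‖A‖ * ‖x‖^2) * ‖R‖^n := by
    intro n hn
    have h1 : q n ≤ ‖(inner ℂ (A ((R^n) x)) x : ℂ)‖ := re_le_norm' _
    refine h1.trans ?_
    have h2 : ‖(inner ℂ (A ((R^n) x)) x : ℂ)‖ ≤ ‖A ((R^n) x)‖ * ‖x‖ := norm_inner_le_norm _ _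
    refine h2.trans ?_
    have h3 : ‖A ((R^n) x)‖ ≤ ‖A‖ * (‖R‖^n * ‖x‖) := by
      refine (A.le_opNorm _).trans ?_
      gcongr
      exact ((R^n).le_opNorm x).trans (by gcongr; exact norm_pow_le' R hn)
    calc ‖A ((R^n) x)‖ * ‖x‖ ≤ (‖A‖ * (‖R‖^n * ‖x‖)) * ‖x‖ := by
          gcongr
      _ = (‖A‖ * ‖x‖^2) * ‖R‖^n := by ring
  have hq1 : q 1 = aNorm A (T x) ^ 2 := by
    have e1 : (R^1) x = S (T x) := by rw [pow_one]; rfl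
    have e2 : A (S (T x)) = ContinuousLinearMap.adjoint T (A (T x)) := by
      have := congrArg (fun f : H →L[ℂ] H => f (T x)) hT.1
      simpa using this
    have : q 1 = (inner ℂ (A (T x)) (T x) : ℂ).re := by
      rw [hqdef]; simp only [e1, e2, ContinuousLinearMap.adjoint_inner_left]
    rw [this]
    have h4 := aInner_eq_sqrt A hA (T x) (T x)
    rw [aInner] at h4
    rw [h4, re_inner_self, aNorm_eq_sqrt A hA]
  have hq1nn : 0 ≤ q 1 := by rw [hq1]; positivity
  have hiter : ∀ k : ℕ, q 1 ^ (2^k) ≤ q (2^k) := by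
    intro k
    induction k with
    | zero => simp
    | succ k ih =>
      have h0 : 0 ≤ q 1 ^ (2^k) := pow_nonneg hq1nn _
      have e : (2:ℕ)^(k+1) = 2^k * 2 := by rw [pow_succ]
      calc q 1 ^ (2^(k+1)) = (q 1 ^ (2^k))^2 := by rw [e, pow_mul]
        _ ≤ (q (2^k))^2 := pow_le_pow_left₀ h0 ih 2
        _ ≤ (Real.sqrt (q (2*2^k)))^2 := pow_le_pow_left₀ (h0.trans ih) (hCS _) 2
        _ = q (2*2^k) := Real.sq_sqrt (by rw [hq2]; positivity)
        _ = q (2^(k+1)) := by rw [e, Nat.mul_comm]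
  -- conclude q 1 ≤ ‖R‖
  have hfin : q 1 ≤ ‖R‖ := by
    by_contra hcon
    push_neg at hcon
    have hq1pos : 0 < q 1 := lt_of_le_of_lt (norm_nonneg R) hcon
    rcases eq_or_lt_of_le (norm_nonneg R) with hr0 | hrpos
    · have h2 := (hiter 1).trans (hqle 2 (by norm_num))
      rw [← hr0] at h2
      have h3 : q 1 ^ 2 ≤ 0 := by simpa using h2
      nlinarith
    · set t : ℝ := q 1 / ‖R‖ with htdef
      have ht : 1 < t := (one_lt_div hrpos).mpr hcon
      have hC : ∀ k : ℕ, t ^ (2^k) ≤ ‖A‖ * ‖x‖^2 := by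
        intro k
        have h1 := (hiter k).trans (hqle (2^k) (Nat.pow_pos (by norm_num)))
        rw [htdef, div_pow, div_le_iff₀ (pow_pos hrpos _)]
        linarith [h1]
      obtain ⟨k, hk⟩ := pow_unbounded_of_one_lt (‖A‖ * ‖x‖^2) ht
      have : t ^ k ≤ t ^ (2^k) := pow_le_pow_right₀ ht.le (Nat.lt_two_pow_self (n := k)).le
      linarith [hC k]
  rw [← hq1]; exact hfin

theorem stmt9 (A T S : H →L[ℂ] H) (hA : A.IsPositive) (hT : IsAAdjoint A T S)
    (α : ℝ) (hα : α ∈ Set.Icc (0:ℝ) 1) :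
    alphaNorm A T α ^ 2 ≥ α * cA A T ^ 2 + (1 - α) * opNormA A T ^ 2 := by
  obtain ⟨hα0, hα1⟩ := hα
  rw [ge_iff_le]
  by_cases hex : ∃ x : H, aNorm A x = 1
  case neg =>
    push_neg at hex
    have h1 : alphaNorm A T α = 0 := by
      rw [alphaNorm]
      convert Real.sSup_empty using 2
      rw [Set.eq_empty_iff_forall_notMem]
      rintro r ⟨x, hx, -⟩; exact hex x hx
    have h2 : cA A T = 0 := by
      rw [cA]
      convert Real.sInf_empty using 2
      rw [Set.eq_empty_iff_forall_notMem]
      rintro r ⟨x, hx, -⟩; exact hex x hx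
    have h3 : opNormA A T = 0 := by
      rw [opNormA]
      convert Real.sSup_empty using 2
      rw [Set.eq_empty_iff_forall_notMem]
      rintro r ⟨x, -, hx, -⟩; exact hex x hx
    rw [h1, h2, h3]; norm_num
  case pos =>
  set c := Real.sqrt ‖S ∘L T‖ with hc
  have hc0 : 0 ≤ c := Real.sqrt_nonneg _
  have hbound : ∀ x : H, aNorm A x = 1 → aNorm A (T x) ≤ c := by
    intro x hx
    have h := Real.sqrt_le_sqrt (aNorm_apply_le A T S hA hT x hx)
    rwa [Real.sqrt_sq (aNorm_nonneg A (T x))] at h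
  set N := alphaNorm A T α with hN
  have hNS : N = sSup {r | ∃ x, aNorm A x = 1 ∧
      r = Real.sqrt (α * ‖aInner A (T x) x‖ ^ 2 + (1 - α) * aNorm A (T x) ^ 2)} := rfl
  have hSαbdd : BddAbove {r | ∃ x, aNorm A x = 1 ∧
      r = Real.sqrt (α * ‖aInner A (T x) x‖ ^ 2 + (1 - α) * aNorm A (T x) ^ 2)} := by
    refine ⟨c, ?_⟩
    rintro r ⟨x, hx, rfl⟩
    have hm : ‖aInner A (T x) x‖ ≤ c := by
      have h := aInner_abs_le A hA (T x) x
      rw [hx, mul_one] at h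
      exact h.trans (hbound x hx)
    have hn := hbound x hx
    have habs0 : (0:ℝ) ≤ ‖aInner A (T x) x‖ := norm_nonneg _
    have h1 : α * ‖aInner A (T x) x‖ ^ 2 + (1-α) * aNorm A (T x)^2 ≤ c^2 := by
      have hm2 : ‖aInner A (T x) x‖ ^ 2 ≤ c^2 := pow_le_pow_left₀ habs0 hm 2
      have hn2 : aNorm A (T x)^2 ≤ c^2 := pow_le_pow_left₀ (aNorm_nonneg A (T x)) hn 2
      have e1 := mul_le_mul_of_nonneg_left hm2 hα0
      have e2 := mul_le_mul_of_nonneg_left hn2 (by linarith : (0:ℝ) ≤ 1 - α)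
      nlinarith
    calc Real.sqrt (α * ‖aInner A (T x) x‖ ^ 2 + (1-α) * aNorm A (T x)^2)
        ≤ Real.sqrt (c^2) := Real.sqrt_le_sqrt h1
      _ = c := Real.sqrt_sq hc0
  have hcAnn : 0 ≤ cA A T :=
    Real.sInf_nonneg (by rintro r ⟨x, hx, rfl⟩; exact norm_nonneg _)
  have hkey : ∀ x : H, aNorm A x = 1 →
      α * cA A T ^ 2 + (1-α) * aNorm A (T x)^2 ≤ N^2 := by
    intro x hx
    have hm0 : (0:ℝ) ≤ ‖aInner A (T x) x‖ := norm_nonneg _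
    have hcA_le : cA A T ≤ ‖aInner A (T x) x‖ :=
      csInf_le ⟨0, by rintro r ⟨y, hy, rfl⟩; exact norm_nonneg _⟩ ⟨x, hx, rfl⟩
    set v := α * ‖aInner A (T x) x‖ ^ 2 + (1-α) * aNorm A (T x)^2 with hv
    have hv0 : 0 ≤ v := add_nonneg (mul_nonneg hα0 (sq_nonneg _))
      (mul_nonneg (by linarith) (sq_nonneg _))
    have hle : Real.sqrt v ≤ N := by
      rw [hNS]
      exact le_csSup hSαbdd ⟨x, hx, rfl⟩
    have hN0 : 0 ≤ N := (Real.sqrt_nonneg _).trans hle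
    have h2 : v ≤ N^2 := by
      have h3 := pow_le_pow_left₀ (Real.sqrt_nonneg v) hle 2
      rwa [Real.sq_sqrt hv0] at h3
    rw [hv] at h2
    have e3 : cA A T ^ 2 ≤ ‖aInner A (T x) x‖ ^ 2 :=
      pow_le_pow_left₀ hcAnn hcA_le 2
    have e4 := mul_le_mul_of_nonneg_left e3 hα0
    linarith
  obtain ⟨x₀, hx₀⟩ := hex
  have hK0 : α * cA A T^2 ≤ N^2 := by
    have h := hkey x₀ hx₀
    nlinarith [aNorm_nonneg A (T x₀), sq_nonneg (aNorm A (T x₀))]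
  have hopS : opNormA A T = sSup {r | ∃ x ∈ closure (Set.range A),
      aNorm A x = 1 ∧ r = aNorm A (T x)} := rfl
  have hop0 : 0 ≤ opNormA A T := by
    rw [hopS]
    exact Real.sSup_nonneg (by rintro r ⟨x, -, hx, rfl⟩; exact aNorm_nonneg A (T x))
  rcases eq_or_ne α 1 with h1 | h1
  · rw [h1]; norm_num; linarith [hK0, h1 ▸ hK0]
  · have hα1' : α < 1 := lt_of_le_of_ne hα1 h1
    have h1α : (0:ℝ) < 1 - α := by linarith
    by_cases hSOe : {r | ∃ x ∈ closure (Set.range A),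
        aNorm A x = 1 ∧ r = aNorm A (T x)}.Nonempty
    · have h4 : (0:ℝ) ≤ (N^2 - α * cA A T^2)/(1-α) := div_nonneg (by linarith) h1α.le
      have hsup : opNormA A T ≤ Real.sqrt ((N^2 - α * cA A T^2)/(1-α)) := by
        rw [hopS]
        apply csSup_le hSOe
        rintro r ⟨x, -, hx, rfl⟩
        have h3 := hkey x hx
        have h5 : aNorm A (T x)^2 ≤ (N^2 - α * cA A T^2)/(1-α) := by
          rw [le_div_iff₀ h1α]; nlinarith
        calc aNorm A (T x) = Real.sqrt (aNorm A (T x)^2) :=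
              (Real.sqrt_sq (aNorm_nonneg A (T x))).symm
          _ ≤ Real.sqrt ((N^2 - α * cA A T^2)/(1-α)) := Real.sqrt_le_sqrt h5
      have h6 : opNormA A T ^2 ≤ (N^2 - α * cA A T^2)/(1-α) := by
        have h7 := pow_le_pow_left₀ hop0 hsup 2
        rwa [Real.sq_sqrt h4] at h7
      have h8 := mul_le_mul_of_nonneg_left h6 h1α.le
      rw [mul_div_cancel₀ _ h1α.ne'] at h8
      linarith
    · have h9 : opNormA A T = 0 := by
        rw [hopS, Set.not_nonempty_iff_eq_empty.mp hSOe, Real.sSup_empty]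
      rw [h9]
      nlinarith
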